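/- For every prime q and natural number a ≥ 1, and for every n with (q-1) | n (and, if q = 2, additionally requiring n = 1 or n even in case a ≥ 2), we have S_n(q^a) ≡ φ(q^a) (mod q^a) while S_n(q^(a+1)) ≡ 0 (mod q^a); in particular S_n(q^a) ≢ S_n(q^(a+1)) (mod q^a). -/

import Mathlib

def S (n m : ℕ) : ℕ := ∑ i ∈ Finset.Icc 1 m, i ^ n

lemma binom_aux {R : Type*} [CommRing R] (x y : R) :
    ∀ n : ℕ, ∃ c : R, (x + y) ^ n = x ^ n + n * x ^ (n - 1) * y + y ^ 2 * c := by
  intro n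
  induction n with
  | zero => exact ⟨0, by simp⟩
  | succ n ih =>
    obtain ⟨c, hc⟩ := ih
    cases n with
    | zero => exact ⟨0, by ring⟩
    | succ m =>
      refine ⟨c * (x + y) + (m + 1) * x ^ m, ?_⟩
      rw [pow_succ, hc]
      push_cast
      ring_nf

lemma blocks {M : Type*} [AddCommMonoid M] (f : ℕ → M) (K m : ℕ) :
    ∑ i ∈ Finset.Ioc 0 (K * m), f i
      = ∑ k ∈ Finset.range K, ∑ i ∈ Finset.Ioc (k * m) ((k + 1) * m), f i := by
  induction K with
  | zero => simp
  | succ K ih =>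
    rw [Finset.sum_range_succ, ← ih,
      Finset.sum_Ioc_consecutive f (Nat.zero_le _) (Nat.mul_le_mul_right m (Nat.le_succ K))]

lemma step (p b n : ℕ) (hp : p.Prime) (hb : 1 ≤ b) (hn : 1 ≤ n)
    (h2 : p = 2 → n = 1 ∨ Even n) :
    ((S n (p ^ (b + 1)) : ℕ) : ZMod (p ^ (b + 1)))
      = p * ((S n (p ^ b) : ℕ) : ZMod (p ^ (b + 1))) := by
  have hIcc : ∀ x : ℕ, Finset.Icc 1 x = Finset.Ioc 0 x := fun x => Finset.Icc_add_one_left_eq_Ioc 0 x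
  set R := ZMod (p ^ (b + 1)) with hR
  set m : ℕ := p ^ b with hm
  have hmsq : ((m : R)) ^ 2 = 0 := by
    have h1 : ((m ^ 2 : ℕ) : R) = 0 :=
      (ZMod.natCast_eq_zero_iff _ _).mpr
        (by rw [hm, ← pow_mul]; exact pow_dvd_pow p (by omega))
    push_cast at h1
    exact h1
  set A : R := ∑ i ∈ Finset.Ioc 0 m, (i : R) ^ n with hA
  set T : R := ∑ i ∈ Finset.Ioc 0 m, (i : R) ^ (n - 1) with hT
  have key : ∀ k : ℕ, (∑ i ∈ Finset.Ioc (k * m) ((k + 1) * m), ((i : R)) ^ n)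
      = A + ((n : R) * m * T) * k := by
    intro k
    have hset : Finset.Ioc (k * m) ((k + 1) * m)
        = (Finset.Ioc 0 m).map (addLeftEmbedding (k * m)) := by
      rw [Finset.map_add_left_Ioc]
      congr 1; ring
    rw [hset, Finset.sum_map]
    have hpt : ∀ i ∈ Finset.Ioc 0 m, ((addLeftEmbedding (k * m) i : ℕ) : R) ^ n
        = (i : R) ^ n + ((n : R) * (i : R) ^ (n - 1) * m) * k := by
      intro i _
      obtain ⟨c, hc⟩ := binom_aux (i : R) (((k * m : ℕ) : R)) n
      have he : ((addLeftEmbedding (k * m) i : ℕ) : R) = (i : R) + ((k * m : ℕ) : R) := by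
        show (((k * m) + i : ℕ) : R) = _
        push_cast
        ring
      have hz : (((k * m : ℕ) : R)) ^ 2 = 0 := by
        push_cast
        rw [show ((k*m:ℕ):R) = (k:R)*(m:R) from Nat.cast_mul (α := ZMod (p ^ (b + 1))) k m]
        rw [mul_pow, hmsq, mul_zero]
      rw [he, hc, hz, zero_mul, add_zero]
      push_cast
      rw [show ((k*m:ℕ):R) = (k:R)*(m:R) from Nat.cast_mul (α := ZMod (p ^ (b + 1))) k m]
      ring
    rw [Finset.sum_congr rfl hpt, Finset.sum_add_distrib]
    congr 1
    rw [← Finset.sum_mul]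
    have hs : ∑ i ∈ Finset.Ioc 0 m, (n : R) * (i : R) ^ (n - 1) * (m : R)
        = (n : R) * (m : R) * T := by
      rw [hT, Finset.mul_sum]
      exact Finset.sum_congr rfl (fun i _ => by ring)
    rw [hs]
  rw [S, S, hIcc, hIcc]
  push_cast
  have hset2 : Finset.Ioc 0 (p ^ (b + 1)) = Finset.Ioc 0 (p * m) := by
    rw [hm, pow_succ, Nat.mul_comm]
  rw [hset2, blocks (fun i => ((i : ℕ) : R) ^ n) p m]
  rw [Finset.sum_congr rfl (fun k _ => key k), Finset.sum_add_distrib,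
    Finset.sum_const, Finset.card_range, nsmul_eq_mul, ← Finset.mul_sum,
    ← Nat.cast_sum]
  suffices hz : ((n : R) * m * T) * ((∑ k ∈ Finset.range p, k : ℕ) : R) = 0 by
    rw [hz, add_zero]
  by_cases hp2 : p = 2
  · subst hp2
    rcases h2 rfl with h1 | heven
    · subst h1
      have hTm : T = (m : R) := by
        rw [hT]
        simp [Nat.card_Ioc]
      rw [hTm]
      have hs2 : (∑ k ∈ Finset.range 2, k) = 1 := by decide
      rw [hs2]
      push_cast
      linear_combination hmsq
    · obtain ⟨t, ht⟩ := heven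
      have hnm : ((n * m : ℕ) : R) = 0 := by
        refine (ZMod.natCast_eq_zero_iff _ _).mpr ?_
        rw [ht, hm]
        exact ⟨t, by ring⟩
      push_cast at hnm
      rw [show ((n*m:ℕ):R) = (n:R)*(m:R) from Nat.cast_mul (α := ZMod (2 ^ (b + 1))) n m] at hnm
      rw [show (n : R) * (m : R) * T = 0 * T by rw [← hnm], zero_mul, zero_mul]
  · obtain ⟨j, hj⟩ := hp.odd_of_ne_two hp2
    have hsum : (∑ k ∈ Finset.range p, k) = p * j := by
      have h := Finset.sum_range_id_mul_two p
      have h' : p * (p - 1) = p * j * 2 := by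
        subst hj
        rw [show 2 * j + 1 - 1 = 2 * j from rfl]
        ring
      exact Nat.eq_of_mul_eq_mul_right (by norm_num) (h.trans h')
    rw [hsum]
    have hmG : ((m * (p * j) : ℕ) : R) = 0 := by
      refine (ZMod.natCast_eq_zero_iff _ _).mpr ?_
      rw [hm]
      exact ⟨j, by ring⟩
    push_cast at hmG
    push_cast
    rw [show ((m*(p*j):ℕ):R) = (m:R)*((p:R)*(j:R)) from
      (Nat.cast_mul (α := ZMod (p ^ (b + 1))) m (p * j)).trans (congrArg _ (Nat.cast_mul (α := ZMod (p ^ (b + 1))) p j))] at hmG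
    rw [show ((p*j:ℕ):R) = (p:R)*(j:R) from Nat.cast_mul (α := ZMod (p ^ (b + 1))) p j]
    linear_combination ((n : R) * T) * hmG

lemma key_lemma (p n : ℕ) (hp : p.Prime) (hn : 1 ≤ n) (hd : p - 1 ∣ n)
    (h2 : p = 2 → n = 1 ∨ Even n) :
    ∀ b, 1 ≤ b → (S n (p ^ b) : ℤ) ≡ (p : ℤ) ^ b - (p : ℤ) ^ (b - 1) [ZMOD ((p : ℤ) ^ b)] := by
  haveI : Fact p.Prime := ⟨hp⟩
  intro b
  induction b with
  | zero => intro h; omega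
  | succ b ih =>
    intro _
    by_cases hb : 1 ≤ b
    · -- inductive step
      have ihb := ih hb
      obtain ⟨t, ht⟩ := Int.modEq_iff_dvd.mp ihb
      have hS : (S n (p ^ b) : ℤ) = (p : ℤ) ^ b - (p : ℤ) ^ (b - 1) - (p : ℤ) ^ b * t := by
        linarith
      have hb1 : b - 1 + 1 = b := by omega
      rw [show (b + 1) - 1 = b from rfl,
        show ((p : ℤ) ^ (b + 1)) = ((p ^ (b + 1) : ℕ) : ℤ) by push_cast; ring]
      refine (ZMod.intCast_eq_intCast_iff _ _ (p ^ (b + 1))).mp ?_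
      rw [Int.cast_natCast, step p b n hp hb hn h2,
        show ((S n (p ^ b) : ℕ) : ZMod (p ^ (b + 1))) = (((S n (p ^ b) : ℤ)) : ZMod (p ^ (b + 1))) from
          (Int.cast_natCast _).symm,
        hS]
      have hzero : ((p : ZMod (p ^ (b + 1)))) ^ (b + 1) = 0 := by
        have h0 : ((p ^ (b + 1) : ℕ) : ZMod (p ^ (b + 1))) = 0 := ZMod.natCast_self _
        push_cast at h0
        exact h0
      have hpb : (p : ZMod (p ^ (b + 1))) * (p : ZMod (p ^ (b + 1))) ^ (b - 1)
          = (p : ZMod (p ^ (b + 1))) ^ b := by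
        rw [← pow_succ', hb1]
      push_cast
      linear_combination (-1 : ZMod (p ^ (b + 1))) * hpb
        + (-((t : ℤ) : ZMod (p ^ (b + 1)))) * hzero
    · -- base case b = 0
      have hb0 : b = 0 := by omega
      subst hb0
      simp only [zero_add, pow_one, Nat.sub_self, pow_zero]
      have hps : p - 1 + 1 = p := Nat.succ_pred_eq_of_pos hp.pos
      obtain ⟨k, hk⟩ := hd
      have hone : ∀ i ∈ Finset.Icc 1 (p - 1), ((i : ZMod p)) ^ n = 1 := by
        intro i hi
        simp only [Finset.mem_Icc] at hi
        have hne : (i : ZMod p) ≠ 0 := by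
          rw [Ne, ZMod.natCast_eq_zero_iff]
          intro hdvd
          have := Nat.le_of_dvd (by omega) hdvd
          have hp1 := hp.two_le
          omega
        rw [hk, pow_mul, ZMod.pow_card_sub_one_eq_one hne, one_pow]
      have hmain : ((S n p : ℕ) : ZMod p) = ((p - 1 : ℕ) : ZMod p) := by
        rw [S]
        push_cast
        rw [show Finset.Icc 1 p = Finset.Icc 1 ((p - 1) + 1) by rw [hps],
          Finset.sum_Icc_succ_top (by omega), hps]
        rw [Finset.sum_congr rfl hone, Finset.sum_const, Nat.card_Icc,
          ZMod.natCast_self, zero_pow (by omega : n ≠ 0), add_zero, nsmul_eq_mul, mul_one]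
        norm_num
      have hMOD : S n p ≡ p - 1 [MOD p] := (ZMod.natCast_eq_natCast_iff _ _ _).mp hmain
      have hZ : (S n p : ℤ) ≡ ((p - 1 : ℕ) : ℤ) [ZMOD (p : ℤ)] := Int.natCast_modEq_iff.mpr hMOD
      rwa [Nat.cast_sub hp.one_le, Nat.cast_one] at hZ

theorem stmt9 (q a n : ℕ) (hq : q.Prime) (ha : 1 ≤ a) (hn : 1 ≤ n)
    (hd : q - 1 ∣ n) (h2 : q = 2 → 2 ≤ a → n = 1 ∨ Even n) :
    S n (q ^ a) ≡ Nat.totient (q ^ a) [MOD q ^ a] ∧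
    S n (q ^ (a + 1)) ≡ 0 [MOD q ^ a] ∧
    ¬ S n (q ^ a) ≡ S n (q ^ (a + 1)) [MOD q ^ a] := by
  by_cases hsp : q = 2 ∧ a = 1
  · obtain ⟨hq2, ha1⟩ := hsp
    subst hq2 ha1
    have e1 : S n (2 ^ 1) = 1 + 2 ^ n := by
      have hI : Finset.Icc 1 2 = {1, 2} := by decide
      simp [S, hI]
    have e2 : S n (2 ^ (1 + 1)) = 1 + 2 ^ n + 3 ^ n + 4 ^ n := by
      have hI : Finset.Icc 1 4 = {1, 2, 3, 4} := by decide
      show (∑ i ∈ Finset.Icc 1 4, i ^ n) = _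
      rw [hI]
      simp [Finset.sum_insert, Finset.mem_insert]
      ring
    have h3m : 3 ^ n % 2 = 1 := by rw [Nat.pow_mod]; norm_num
    have h2m : 2 ^ n % 2 = 0 := by
      rw [Nat.pow_mod]
      simp [zero_pow (by omega : n ≠ 0)]
    have h4m : 4 ^ n % 2 = 0 := by
      rw [Nat.pow_mod]
      simp [zero_pow (by omega : n ≠ 0)]
    have hφ : Nat.totient (2 ^ 1) = 1 := by decide
    refine ⟨?_, ?_, ?_⟩
    · show _ % _ = _ % _
      rw [e1, hφ]
      omega
    · show _ % _ = _ % _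
      rw [e2]
      omega
    · intro hcon
      have := hcon
      unfold Nat.ModEq at this
      rw [e1, e2] at this
      omega
  · have h2' : q = 2 → n = 1 ∨ Even n := by
      intro hq2
      refine h2 hq2 ?_
      rcases Nat.lt_or_ge a 2 with h | h
      · exact absurd ⟨hq2, by omega⟩ hsp
      · exact h
    have k1 := key_lemma q n hq hn hd h2' a ha
    have k2 := key_lemma q n hq hn hd h2' (a + 1) (by omega)
    rw [show (a + 1) - 1 = a from rfl] at k2
    have ha1 : a - 1 + 1 = a := by omega
    have hφZ : ((Nat.totient (q ^ a) : ℕ) : ℤ) = (q : ℤ) ^ a - (q : ℤ) ^ (a - 1) := by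
      rw [Nat.totient_prime_pow hq ha]
      push_cast
      rw [Nat.cast_sub hq.one_le,
        show (q : ℤ) ^ a = (q : ℤ) ^ (a - 1) * q by rw [← pow_succ, ha1]]
      push_cast
      ring
    have hA : S n (q ^ a) ≡ Nat.totient (q ^ a) [MOD q ^ a] := by
      rw [Nat.modEq_iff_dvd, hφZ]
      have h := Int.modEq_iff_dvd.mp k1
      push_cast
      exact h
    have hSdvd : (q : ℤ) ^ a ∣ (S n (q ^ (a + 1)) : ℤ) := by
      have h := Int.modEq_iff_dvd.mp k2
      have h' : (q : ℤ) ^ a ∣ ((q : ℤ) ^ (a + 1) - (q : ℤ) ^ a) - (S n (q ^ (a + 1)) : ℤ) :=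
        dvd_trans (pow_dvd_pow _ (by omega)) h
      have h'' : (q : ℤ) ^ a ∣ (q : ℤ) ^ (a + 1) - (q : ℤ) ^ a :=
        dvd_sub (pow_dvd_pow _ (by omega)) dvd_rfl
      have := dvd_sub h'' h'
      simpa using this
    have hB : S n (q ^ (a + 1)) ≡ 0 [MOD q ^ a] := by
      rw [Nat.modEq_iff_dvd]
      push_cast
      simpa using hSdvd.neg_right
    refine ⟨hA, hB, ?_⟩
    intro hcon
    have hz : Nat.totient (q ^ a) ≡ 0 [MOD q ^ a] := (hA.symm.trans hcon).trans hB
    have hdvd : q ^ a ∣ Nat.totient (q ^ a) := Nat.modEq_zero_iff_dvd.mp hz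
    have hpos : 0 < Nat.totient (q ^ a) := Nat.totient_pos.mpr (pow_pos hq.pos a)
    have hlt : Nat.totient (q ^ a) < q ^ a :=
      Nat.totient_lt _ (Nat.one_lt_pow (by omega) hq.one_lt)
    exact absurd (Nat.le_of_dvd hpos hdvd) (not_le.mpr hlt)
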